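/- arXiv:1305.6635 — 4 statements merged into one kernel-verified Lean document; each statement's English description precedes it below -/
import Mathlib

section
/- Let T, T' be independent exponentially distributed random variables with mean σ > 0, and let G, G' be independent identically distributed nonnegative random variables, independent of T, T'. Then for any t ∈ ℝ and τ > 0 with τ ≠ σ, E[exp(-|t + T + G - T' - G'|/τ)] = (τ/(τ+σ)) · (τ·E[exp(-|G'-G-t|/τ)] - σ·E[exp(-|G'-G-t|/σ)])/(τ-σ). -/
open MeasureTheory ProbabilityTheory Real

open Set Filter Topology

open scoped ENNReal NNReal

section Aux

lemma L1 {b : ℝ} (hb : 0 < b) (s : ℝ) :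
    ∫ x in Ioi s, exp (-(b * x)) = exp (-(b * s)) / b := by
  have hderiv : ∀ x ∈ Ioi s, HasDerivAt (fun y => -(exp (-(b * y)) / b)) (exp (-(b * x))) x := by
    intro x _
    have h1 : HasDerivAt (fun y : ℝ => -(b * y)) (-b) x := by
      simpa using (hasDerivAt_id x).const_mul (-b)
    have h2 := (h1.exp.div_const b).neg
    have h3 : -(rexp (-(b * x)) * -b / b) = rexp (-(b * x)) := by
      rw [mul_neg, neg_div, neg_neg, mul_div_assoc, div_self hb.ne', mul_one]
    exact h3 ▸ h2
  have hint : IntegrableOn (fun x => exp (-(b * x))) (Ioi s) := by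
    simpa [neg_mul] using exp_neg_integrableOn_Ioi s hb
  have htend : Tendsto (fun y => -(exp (-(b * y)) / b)) atTop (𝓝 0) := by
    have h1 : Tendsto (fun y : ℝ => -(b * y)) atTop atBot := by
      exact tendsto_neg_atTop_atBot.comp ((tendsto_const_mul_atTop_of_pos hb).2 tendsto_id)
    have h2 := (Real.tendsto_exp_atBot.comp h1).div_const b |>.neg
    simpa [neg_div, Function.comp] using h2
  have hcont : ContinuousWithinAt (fun y => -(exp (-(b * y)) / b)) (Ici s) s := by
    apply Continuous.continuousWithinAt; fun_prop
  have := MeasureTheory.integral_Ioi_of_hasDerivAt_of_tendsto hcont hderiv hint htend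
  rw [this]; field_simp; ring

lemma L2 {c : ℝ} (hc : c ≠ 0) (s : ℝ) :
    ∫ x in (0:ℝ)..s, exp (c * x) = (exp (c * s) - 1) / c := by
  have hderiv : ∀ x ∈ uIcc (0:ℝ) s, HasDerivAt (fun y => exp (c * y) / c) (exp (c * x)) x := by
    intro x _
    have h1 : HasDerivAt (fun y : ℝ => c * y) c x := by simpa using (hasDerivAt_id x).const_mul c
    have h2 := h1.exp.div_const c
    have h3 : rexp (c * x) * c / c = rexp (c * x) := by
      rw [mul_div_assoc, div_self hc, mul_one]
    exact h3 ▸ h2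
  have hint : IntervalIntegrable (fun x => exp (c * x)) volume 0 s := by
    apply Continuous.intervalIntegrable; fun_prop
  rw [intervalIntegral.integral_eq_sub_of_hasDerivAt hderiv hint]
  simp [Real.exp_zero]; ring

lemma intOn_exp {b : ℝ} (hb : 0 < b) (a : ℝ) :
    IntegrableOn (fun x => exp (-(b * x))) (Ioi a) := by
  simpa [neg_mul] using exp_neg_integrableOn_Ioi a hb

lemma int_bdd {α : Type*} [MeasurableSpace α] (μ : Measure α) [IsFiniteMeasure μ] {f : α → ℝ}
    (hf : AEStronglyMeasurable f μ) (hbd : ∀ a, |f a| ≤ 1) : Integrable f μ :=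
  Integrable.mono' (integrable_const 1) hf (Filter.Eventually.of_forall hbd)

lemma L0 {r : ℝ} (hr : 0 < r) (g : ℝ → ℝ) :
    ∫ x, g x ∂(expMeasure r) = ∫ x in Ioi 0, r * exp (-(r * x)) * g x := by
  have hEq : expMeasure r = volume.withDensity (fun x => ((exponentialPDFReal r x).toNNReal : ℝ≥0∞)) := by
    rfl
  rw [hEq, integral_withDensity_eq_integral_smul ((measurable_exponentialPDFReal r).real_toNNReal) g]
  have hpdf : ∀ x, exponentialPDFReal r x = if 0 ≤ x then r * exp (-(r * x)) else 0 := by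
    intro x
    rw [exponentialPDFReal, gammaPDFReal]
    simp only [rpow_one, Real.Gamma_one, div_one, sub_self, rpow_zero, mul_one]
  have h1 : ∀ x, ((exponentialPDFReal r x).toNNReal : ℝ) • g x
      = (if 0 ≤ x then r * exp (-(r * x)) else 0) * g x := by
    intro x
    rw [smul_eq_mul, Real.coe_toNNReal _ (exponentialPDFReal_nonneg hr x), hpdf]
  simp only [NNReal.smul_def, h1]
  rw [← setIntegral_eq_integral_of_forall_compl_eq_zero
      (s := Ici 0) (fun x hx => by rw [if_neg (by simpa using hx), zero_mul])]
  rw [setIntegral_congr_fun (g := fun x => r * rexp (-(r * x)) * g x) measurableSet_Ici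
      (fun x hx => by rw [if_pos (mem_Ici.mp hx)]),
    integral_Ici_eq_integral_Ioi]

lemma Ig_nonpos {σ τ : ℝ} (hσ : 0 < σ) (hτ : 0 < τ) {s : ℝ} (hs : s ≤ 0) :
    ∫ y, exp (-|s - y| / τ) ∂(expMeasure σ⁻¹) = τ / (τ + σ) * exp (s / τ) := by
  rw [L0 (inv_pos.2 hσ)]
  have hb : (0:ℝ) < σ⁻¹ + τ⁻¹ := by positivity
  have hcong : ∀ y ∈ Ioi (0:ℝ), σ⁻¹ * exp (-(σ⁻¹ * y)) * exp (-|s - y| / τ)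
      = (σ⁻¹ * exp (s / τ)) * exp (-((σ⁻¹ + τ⁻¹) * y)) := by
    intro y hy
    rw [abs_of_nonpos (by simp only [mem_Ioi] at hy; linarith)]
    rw [mul_assoc, mul_assoc, ← exp_add, ← exp_add]
    congr 1
    field_simp
    ring
  rw [setIntegral_congr_fun measurableSet_Ioi hcong, MeasureTheory.integral_const_mul,
    L1 hb 0]
  rw [mul_zero, neg_zero, Real.exp_zero]
  field_simp

lemma Ig_nonneg {σ τ : ℝ} (hσ : 0 < σ) (hτ : 0 < τ) (hne : τ ≠ σ) {s : ℝ} (hs : 0 ≤ s) :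
    ∫ y, exp (-|s - y| / τ) ∂(expMeasure σ⁻¹)
      = (τ / (σ - τ) + τ / (τ + σ)) * exp (-(s / σ)) - τ / (σ - τ) * exp (-(s / τ)) := by
  rw [L0 (inv_pos.2 hσ)]
  have hb : (0:ℝ) < σ⁻¹ + τ⁻¹ := by positivity
  have hc : τ⁻¹ - σ⁻¹ ≠ 0 := sub_ne_zero.2 (fun h => hne (by rwa [inv_inj] at h))
  set h : ℝ → ℝ := fun y => σ⁻¹ * exp (-(σ⁻¹ * y)) * exp (-|s - y| / τ) with hh
  have hcont : Continuous h := by fun_prop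
  have hint2 : IntegrableOn h (Ioi s) := by
    refine Integrable.mono' ((intOn_exp (inv_pos.2 hσ) s).const_mul σ⁻¹)
      hcont.aestronglyMeasurable (Filter.Eventually.of_forall fun y => ?_)
    rw [hh]
    simp only [norm_mul, norm_eq_abs, abs_of_nonneg (le_of_lt (inv_pos.2 hσ)),
      abs_of_nonneg (le_of_lt (exp_pos _))]
    have h1 : exp (-|s - y| / τ) ≤ 1 := by
      rw [Real.exp_le_one_iff]
      apply div_nonpos_of_nonpos_of_nonneg (neg_nonpos.2 (abs_nonneg _)) hτ.le
    calc σ⁻¹ * rexp (-(σ⁻¹ * y)) * rexp (-|s - y| / τ)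
        ≤ σ⁻¹ * rexp (-(σ⁻¹ * y)) * 1 := by
          apply mul_le_mul_of_nonneg_left h1 (by positivity)
      _ = σ⁻¹ * rexp (-(σ⁻¹ * y)) := mul_one _
  have hint1 : IntegrableOn h (Ioc 0 s) := hcont.integrableOn_Ioc
  rw [← Ioc_union_Ioi_eq_Ioi hs, setIntegral_union (Ioc_disjoint_Ioi le_rfl)
    measurableSet_Ioi hint1 hint2]
  -- first piece
  have hp1 : ∫ y in Ioc 0 s, h y
      = (σ⁻¹ * exp (-(s / τ))) * ((exp ((τ⁻¹ - σ⁻¹) * s) - 1) / (τ⁻¹ - σ⁻¹)) := by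
    have hcong : ∀ y ∈ Ioc (0:ℝ) s, h y = (σ⁻¹ * exp (-(s / τ))) * exp ((τ⁻¹ - σ⁻¹) * y) := by
      intro y hy
      rw [hh]
      simp only
      rw [abs_of_nonneg (by simp only [mem_Ioc] at hy; linarith)]
      rw [mul_assoc, mul_assoc, ← exp_add, ← exp_add]
      congr 1
      field_simp
      ring
    rw [setIntegral_congr_fun measurableSet_Ioc hcong, ← intervalIntegral.integral_of_le hs,
      intervalIntegral.integral_const_mul, L2 hc]
  -- second piece
  have hp2 : ∫ y in Ioi s, h y
      = (σ⁻¹ * exp (s / τ)) * (exp (-((σ⁻¹ + τ⁻¹) * s)) / (σ⁻¹ + τ⁻¹)) := by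
    have hcong : ∀ y ∈ Ioi s, h y = (σ⁻¹ * exp (s / τ)) * exp (-((σ⁻¹ + τ⁻¹) * y)) := by
      intro y hy
      rw [hh]
      simp only
      rw [abs_of_nonpos (by simp only [mem_Ioi] at hy; linarith)]
      rw [mul_assoc, mul_assoc, ← exp_add, ← exp_add]
      congr 1
      field_simp
      ring
    rw [setIntegral_congr_fun measurableSet_Ioi hcong, MeasureTheory.integral_const_mul, L1 hb]
  rw [hp1, hp2]
  have e1 : exp (-(s / τ)) * exp ((τ⁻¹ - σ⁻¹) * s) = exp (-(s / σ)) := by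
    rw [← exp_add]; congr 1; field_simp; ring
  have e2 : exp (s / τ) * exp (-((σ⁻¹ + τ⁻¹) * s)) = exp (-(s / σ)) := by
    rw [← exp_add]; congr 1; field_simp; ring
  have hσt : σ - τ ≠ 0 := sub_ne_zero.2 (fun h => hne h.symm)
  have hts : τ + σ ≠ 0 := by positivity
  have g1 : σ⁻¹ * exp (-(s / τ)) * ((exp ((τ⁻¹ - σ⁻¹) * s) - 1) / (τ⁻¹ - σ⁻¹))
      = σ⁻¹ / (τ⁻¹ - σ⁻¹) * (exp (-(s / σ)) - exp (-(s / τ))) := by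
    rw [← e1]; field_simp
  have g2 : σ⁻¹ * exp (s / τ) * (exp (-((σ⁻¹ + τ⁻¹) * s)) / (σ⁻¹ + τ⁻¹))
      = σ⁻¹ / (σ⁻¹ + τ⁻¹) * exp (-(s / σ)) := by
    rw [← e2]; field_simp
  rw [g1, g2]
  field_simp
  ring

lemma iIndepFun_congr {Ω : Type*} [MeasurableSpace Ω] {μ : Measure Ω} {f g : Fin 4 → Ω → ℝ}
    (h : iIndepFun f μ)
    (h' : ∀ i, f i =ᵐ[μ] g i) :
    iIndepFun g μ := by
  rw [iIndepFun_iff_measure_inter_preimage_eq_mul] at h ⊢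
  intro S sets hsets
  have e : ∀ i (s : Set ℝ), (g i ⁻¹' s : Set Ω) =ᵐ[μ] (f i ⁻¹' s : Set Ω) := by
    intro i s
    filter_upwards [h' i] with ω hω
    show (ω ∈ g i ⁻¹' s) = (ω ∈ f i ⁻¹' s)
    simp only [Set.mem_preimage, hω]
  have hS : μ (⋂ i ∈ S, g i ⁻¹' sets i) = μ (⋂ i ∈ S, f i ⁻¹' sets i) := by
    apply measure_congr
    have hh : ∀ᵐ ω ∂μ, ∀ i ∈ S, f i ω = g i ω :=
      (eventually_all_finite S.finite_toSet).2 (fun i _ => h' i)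
    filter_upwards [hh] with ω hω
    show (ω ∈ ⋂ i ∈ S, g i ⁻¹' sets i) = (ω ∈ ⋂ i ∈ S, f i ⁻¹' sets i)
    simp only [Set.mem_iInter, Set.mem_preimage, eq_iff_iff]
    constructor
    · intro hmem i hi
      rw [hω i hi]; exact hmem i hi
    · intro hmem i hi
      rw [← hω i hi]; exact hmem i hi
  rw [hS, h S hsets]
  exact Finset.prod_congr rfl fun i hi => (measure_congr (e i (sets i))).symm

lemma phi_nonneg {σ τ : ℝ} (hσ : 0 < σ) (hτ : 0 < τ) (hne : τ ≠ σ) {u : ℝ} (hu : 0 ≤ u) :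
    ∫ x, ∫ y, exp (-|u + x - y| / τ) ∂(expMeasure σ⁻¹) ∂(expMeasure σ⁻¹)
      = τ ^ 2 / ((τ + σ) * (τ - σ)) * exp (-(u / τ))
        - τ * σ / ((τ + σ) * (τ - σ)) * exp (-(u / σ)) := by
  rw [L0 (inv_pos.2 hσ)]
  have hb1 : (0:ℝ) < σ⁻¹ + σ⁻¹ := by positivity
  have hb2 : (0:ℝ) < σ⁻¹ + τ⁻¹ := by positivity
  set K1 : ℝ := (τ / (σ - τ) + τ / (τ + σ)) * σ⁻¹ * exp (-(u / σ)) with hK1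
  set K2 : ℝ := τ / (σ - τ) * σ⁻¹ * exp (-(u / τ)) with hK2
  have hcong : ∀ x ∈ Ioi (0:ℝ),
      σ⁻¹ * exp (-(σ⁻¹ * x)) * ∫ y, exp (-|u + x - y| / τ) ∂(expMeasure σ⁻¹)
      = K1 * exp (-((σ⁻¹ + σ⁻¹) * x)) - K2 * exp (-((σ⁻¹ + τ⁻¹) * x)) := by
    intro x hx
    simp only [mem_Ioi] at hx
    rw [Ig_nonneg hσ hτ hne (by linarith : (0:ℝ) ≤ u + x)]
    rw [hK1, hK2]
    have q1 : exp (-(σ⁻¹ * x)) * exp (-((u + x) / σ)) = exp (-(u / σ)) * exp (-((σ⁻¹ + σ⁻¹) * x)) := by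
      rw [← exp_add, ← exp_add]; congr 1; field_simp; ring
    have q2 : exp (-(σ⁻¹ * x)) * exp (-((u + x) / τ)) = exp (-(u / τ)) * exp (-((σ⁻¹ + τ⁻¹) * x)) := by
      rw [← exp_add, ← exp_add]; congr 1; field_simp; ring
    calc σ⁻¹ * exp (-(σ⁻¹ * x)) *
          ((τ / (σ - τ) + τ / (τ + σ)) * exp (-((u + x) / σ)) - τ / (σ - τ) * exp (-((u + x) / τ)))
        = (τ / (σ - τ) + τ / (τ + σ)) * σ⁻¹ * (exp (-(σ⁻¹ * x)) * exp (-((u + x) / σ)))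
          - τ / (σ - τ) * σ⁻¹ * (exp (-(σ⁻¹ * x)) * exp (-((u + x) / τ))) := by ring
      _ = _ := by rw [q1, q2]; ring
  rw [setIntegral_congr_fun measurableSet_Ioi hcong]
  rw [integral_sub ((intOn_exp hb1 0).const_mul K1) ((intOn_exp hb2 0).const_mul K2),
    MeasureTheory.integral_const_mul, MeasureTheory.integral_const_mul, L1 hb1 0, L1 hb2 0]
  simp only [mul_zero, neg_zero, Real.exp_zero]
  rw [hK1, hK2]
  have hσt : σ - τ ≠ 0 := sub_ne_zero.2 (fun h => hne h.symm)
  have hts : τ + σ ≠ 0 := by positivity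
  have htmσ : τ - σ ≠ 0 := sub_ne_zero.2 hne
  field_simp
  ring

lemma phi_eq {σ τ : ℝ} (hσ : 0 < σ) (hτ : 0 < τ) (hne : τ ≠ σ) (u : ℝ) :
    ∫ x, ∫ y, exp (-|u + x - y| / τ) ∂(expMeasure σ⁻¹) ∂(expMeasure σ⁻¹)
      = τ ^ 2 / ((τ + σ) * (τ - σ)) * exp (-|u| / τ)
        - τ * σ / ((τ + σ) * (τ - σ)) * exp (-|u| / σ) := by
  haveI : IsProbabilityMeasure (expMeasure σ⁻¹) := isProbabilityMeasure_expMeasure (inv_pos.2 hσ)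
  have hbd : ∀ (v : ℝ) (p : ℝ × ℝ), |exp (-|v + p.1 - p.2| / τ)| ≤ 1 := by
    intro v p
    rw [abs_of_nonneg (exp_pos _).le, Real.exp_le_one_iff]
    exact div_nonpos_of_nonpos_of_nonneg (neg_nonpos.2 (abs_nonneg _)) hτ.le
  rcases le_total 0 u with hu | hu
  · rw [abs_of_nonneg hu]
    rw [phi_nonneg hσ hτ hne hu]
    simp [neg_div]
  · have hswap : ∫ x, ∫ y, exp (-|u + x - y| / τ) ∂(expMeasure σ⁻¹) ∂(expMeasure σ⁻¹)
        = ∫ y, ∫ x, exp (-|u + x - y| / τ) ∂(expMeasure σ⁻¹) ∂(expMeasure σ⁻¹) := by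
      apply integral_integral_swap
      apply int_bdd
      · apply Continuous.aestronglyMeasurable; fun_prop
      · exact fun p => hbd u p
    rw [hswap]
    have hcong : ∫ y, ∫ x, exp (-|u + x - y| / τ) ∂(expMeasure σ⁻¹) ∂(expMeasure σ⁻¹)
        = ∫ x, ∫ y, exp (-|(-u) + x - y| / τ) ∂(expMeasure σ⁻¹) ∂(expMeasure σ⁻¹) := by
      apply integral_congr_ae
      apply Filter.Eventually.of_forall
      intro y
      apply integral_congr_ae
      apply Filter.Eventually.of_forall
      intro x
      have h5 : |u + x - y| = |(-u) + y - x| := by rw [← abs_neg (u + x - y)]; congr 1; ring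
      show exp (-|u + x - y| / τ) = exp (-|(-u) + y - x| / τ)
      rw [h5]
    rw [hcong, phi_nonneg hσ hτ hne (neg_nonneg.2 hu), abs_of_nonpos hu]
    simp [neg_div]

end Aux

/-- Key lemma, eq (key1): for `T, T'` i.i.d. exponential with mean `σ` and `G, G'` i.i.d.
nonnegative, all jointly independent, and `τ ≠ σ`,
`E[exp(-|t+T+G-T'-G'|/τ)] = τ/(τ+σ) · (τ E[exp(-|G'-G-t|/τ)] - σ E[exp(-|G'-G-t|/σ)])/(τ-σ)`. -/
theorem key_lemma_eq1 {Ω : Type*} [MeasurableSpace Ω] (P : Measure Ω) [IsProbabilityMeasure P]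
    (T T' G G' : Ω → ℝ) (σ τ t : ℝ) (hσ : 0 < σ) (hτ : 0 < τ) (hne : τ ≠ σ)
    (hT : Measure.map T P = expMeasure σ⁻¹)
    (hT' : Measure.map T' P = expMeasure σ⁻¹)
    (hGG' : IdentDistrib G G' P P)
    (hG : ∀ ω, 0 ≤ G ω) (hG' : ∀ ω, 0 ≤ G' ω)
    (hindep : iIndepFun ![T, T', G, G'] P) :
    ∫ ω, exp (-|t + T ω + G ω - T' ω - G' ω| / τ) ∂P =
      τ / (τ + σ) *
        ((τ * ∫ ω, exp (-|G' ω - G ω - t| / τ) ∂P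
          - σ * ∫ ω, exp (-|G' ω - G ω - t| / σ) ∂P) / (τ - σ)) := by
  haveI hPμ : IsProbabilityMeasure (expMeasure σ⁻¹) :=
    isProbabilityMeasure_expMeasure (inv_pos.2 hσ)
  have habs : ∀ (r : ℝ), 0 < r → ∀ x : ℝ, |exp (-|x| / r)| ≤ 1 := by
    intro r hr x
    rw [abs_of_nonneg (exp_pos _).le, Real.exp_le_one_iff]
    exact div_nonpos_of_nonpos_of_nonneg (neg_nonpos.2 (abs_nonneg _)) hr.le
  have hTm : AEMeasurable T P := by
    by_contra h
    have h0 : expMeasure σ⁻¹ univ = 0 := by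
      rw [← hT, Measure.map_of_not_aemeasurable h]; rfl
    rw [measure_univ] at h0; exact one_ne_zero h0
  have hT'm : AEMeasurable T' P := by
    by_contra h
    have h0 : expMeasure σ⁻¹ univ = 0 := by
      rw [← hT', Measure.map_of_not_aemeasurable h]; rfl
    rw [measure_univ] at h0; exact one_ne_zero h0
  have hGm : AEMeasurable G P := hGG'.aemeasurable_fst
  have hG'm : AEMeasurable G' P := hGG'.aemeasurable_snd
  set T1 : Ω → ℝ := hTm.mk T
  set T1' : Ω → ℝ := hT'm.mk T'
  set G1 : Ω → ℝ := hGm.mk G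
  set G1' : Ω → ℝ := hG'm.mk G'
  have hmT1 : Measurable T1 := hTm.measurable_mk
  have hmT1' : Measurable T1' := hT'm.measurable_mk
  have hmG1 : Measurable G1 := hGm.measurable_mk
  have hmG1' : Measurable G1' := hG'm.measurable_mk
  have hae : ∀ i, (![T, T', G, G'] i) =ᵐ[P] (![T1, T1', G1, G1'] i) := by
    intro i
    fin_cases i
    · exact hTm.ae_eq_mk
    · exact hT'm.ae_eq_mk
    · exact hGm.ae_eq_mk
    · exact hG'm.ae_eq_mk
  have hindep1 : iIndepFun
      ![T1, T1', G1, G1'] P := iIndepFun_congr hindep hae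
  have hmeas1 : ∀ i, Measurable ((![T1, T1', G1, G1'] : Fin 4 → Ω → ℝ) i) := by
    intro i
    fin_cases i
    · exact hmT1
    · exact hmT1'
    · exact hmG1
    · exact hmG1'
  set W1 : Ω → ℝ := fun ω => G1 ω - G1' ω with hW1def
  have hW1m : Measurable W1 := hmG1.sub hmG1'
  have hpairm : Measurable (fun ω => (T1 ω, T1' ω)) := hmT1.prodMk hmT1'
  have hWpair : IndepFun W1 (fun ω => (T1 ω, T1' ω)) P := by
    have h4 := hindep1.indepFun_prodMk_prodMk hmeas1 2 3 0 1
      (by decide) (by decide) (by decide) (by decide)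
    have h5 := h4.comp (φ := fun p : ℝ × ℝ => p.1 - p.2) (ψ := id)
      (measurable_fst.sub measurable_snd) measurable_id
    exact h5
  have hTTi : IndepFun T1 T1' P := by
    have := hindep1.indepFun (show (0 : Fin 4) ≠ 1 by decide)
    exact this
  have hmapT1 : P.map T1 = expMeasure σ⁻¹ :=
    (Measure.map_congr hTm.ae_eq_mk).symm.trans hT
  have hmapT1' : P.map T1' = expMeasure σ⁻¹ :=
    (Measure.map_congr hT'm.ae_eq_mk).symm.trans hT'
  have hmap_pair : P.map (fun ω => (T1 ω, T1' ω))
      = (expMeasure σ⁻¹).prod (expMeasure σ⁻¹) := by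
    rw [(indepFun_iff_map_prod_eq_prod_map_map hmT1.aemeasurable hmT1'.aemeasurable).1 hTTi,
      hmapT1, hmapT1']
  set ν : Measure ℝ := P.map W1 with hν
  haveI hνP : IsProbabilityMeasure ν := Measure.isProbabilityMeasure_map hW1m.aemeasurable
  have hmap3 : P.map (fun ω => (W1 ω, (T1 ω, T1' ω)))
      = ν.prod ((expMeasure σ⁻¹).prod (expMeasure σ⁻¹)) := by
    rw [(indepFun_iff_map_prod_eq_prod_map_map hW1m.aemeasurable hpairm.aemeasurable).1 hWpair,
      hmap_pair]
  have hFc : Continuous (fun p : ℝ × ℝ × ℝ => exp (-|t + p.1 + p.2.1 - p.2.2| / τ)) := by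
    fun_prop
  have hLHS : ∫ ω, exp (-|t + T ω + G ω - T' ω - G' ω| / τ) ∂P
      = ∫ p : ℝ × ℝ × ℝ, exp (-|t + p.1 + p.2.1 - p.2.2| / τ)
          ∂(ν.prod ((expMeasure σ⁻¹).prod (expMeasure σ⁻¹))) := by
    rw [← hmap3, integral_map (hW1m.prodMk hpairm).aemeasurable hFc.aestronglyMeasurable]
    apply integral_congr_ae
    filter_upwards [hTm.ae_eq_mk, hT'm.ae_eq_mk, hGm.ae_eq_mk, hG'm.ae_eq_mk]
      with ω e1 e2 e3 e4
    show exp (-|t + T ω + G ω - T' ω - G' ω| / τ)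
      = exp (-|t + (G1 ω - G1' ω) + T1 ω - T1' ω| / τ)
    rw [← (show T ω = T1 ω from e1), ← (show T' ω = T1' ω from e2),
      ← (show G ω = G1 ω from e3), ← (show G' ω = G1' ω from e4)]
    have : t + T ω + G ω - T' ω - G' ω = t + (G ω - G' ω) + T ω - T' ω := by ring
    rw [this]
  have hintF : Integrable (fun p : ℝ × ℝ × ℝ => exp (-|t + p.1 + p.2.1 - p.2.2| / τ))
      (ν.prod ((expMeasure σ⁻¹).prod (expMeasure σ⁻¹))) :=
    int_bdd _ hFc.aestronglyMeasurable (fun p => habs τ hτ _)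
  rw [hLHS, integral_prod _ hintF]
  have hinner : ∀ w : ℝ,
      (∫ q : ℝ × ℝ, exp (-|t + w + q.1 - q.2| / τ)
        ∂((expMeasure σ⁻¹).prod (expMeasure σ⁻¹)))
      = τ ^ 2 / ((τ + σ) * (τ - σ)) * exp (-|t + w| / τ)
        - τ * σ / ((τ + σ) * (τ - σ)) * exp (-|t + w| / σ) := by
    intro w
    rw [integral_prod _ (int_bdd _ (Continuous.aestronglyMeasurable (by fun_prop))
      (fun q => habs τ hτ _))]
    exact phi_eq hσ hτ hne (t + w)
  have houter : (fun w => ∫ q : ℝ × ℝ, exp (-|t + w + q.1 - q.2| / τ)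
        ∂((expMeasure σ⁻¹).prod (expMeasure σ⁻¹)))
      = fun w => τ ^ 2 / ((τ + σ) * (τ - σ)) * exp (-|t + w| / τ)
        - τ * σ / ((τ + σ) * (τ - σ)) * exp (-|t + w| / σ) := funext hinner
  rw [show (fun x => ∫ y : ℝ × ℝ, exp (-|t + x + y.1 - y.2| / τ)
        ∂((expMeasure σ⁻¹).prod (expMeasure σ⁻¹)))
      = fun w => τ ^ 2 / ((τ + σ) * (τ - σ)) * exp (-|t + w| / τ)
        - τ * σ / ((τ + σ) * (τ - σ)) * exp (-|t + w| / σ) from houter]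
  have hi1 : Integrable (fun w => exp (-|t + w| / τ)) ν :=
    int_bdd _ (Continuous.aestronglyMeasurable (by fun_prop)) (fun w => habs τ hτ _)
  have hi2 : Integrable (fun w => exp (-|t + w| / σ)) ν :=
    int_bdd _ (Continuous.aestronglyMeasurable (by fun_prop)) (fun w => habs σ hσ _)
  rw [integral_sub (hi1.const_mul _) (hi2.const_mul _),
    MeasureTheory.integral_const_mul, MeasureTheory.integral_const_mul]
  have hR : ∀ r : ℝ, 0 < r → ∫ ω, exp (-|G' ω - G ω - t| / r) ∂P
      = ∫ w, exp (-|t + w| / r) ∂ν := by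
    intro r hr
    rw [hν, integral_map hW1m.aemeasurable (Continuous.aestronglyMeasurable (by fun_prop))]
    apply integral_congr_ae
    filter_upwards [hGm.ae_eq_mk, hG'm.ae_eq_mk] with ω e3 e4
    show exp (-|G' ω - G ω - t| / r) = exp (-|t + (G1 ω - G1' ω)| / r)
    rw [← (show G ω = G1 ω from e3), ← (show G' ω = G1' ω from e4)]
    have : G' ω - G ω - t = -(t + (G ω - G' ω)) := by ring
    rw [this, abs_neg]
  rw [hR τ hτ, hR σ hσ]
  have hts : τ + σ ≠ 0 := by positivity
  have htms : τ - σ ≠ 0 := sub_ne_zero.2 hne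
  field_simp
end

section
/- For any nonnegative random variable S and τ₁ > τ₂ > 0, if f_S(τ₁, τ₂) := (τ₁·E[exp(-S/τ₁)] - τ₂·E[exp(-S/τ₂)])/(τ₁ - τ₂) = 1 and S has finite variance, then Var[S] = 0. -/
open MeasureTheory ProbabilityTheory Real

/-- If `S ≥ 0` has finite variance and `f_S(τ₁,τ₂) = 1` for some `τ₁ > τ₂ > 0`,
then `Var[S] = 0`. -/
theorem fS_eq_one_var_zero {Ω : Type*} [MeasurableSpace Ω] (P : Measure Ω)
    [IsProbabilityMeasure P]
    (S : Ω → ℝ) (hSmeas : Measurable S) (hS : ∀ ω, 0 ≤ S ω) (hL2 : MemLp S 2 P)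
    (τ₁ τ₂ : ℝ) (hτ₂ : 0 < τ₂) (hτ : τ₂ < τ₁)
    (heq : (τ₁ * ∫ ω, exp (-S ω / τ₁) ∂P - τ₂ * ∫ ω, exp (-S ω / τ₂) ∂P) / (τ₁ - τ₂) = 1) :
    variance S P = 0 := by
  have hτ₁ : 0 < τ₁ := hτ₂.trans hτ
  set g : ℝ → ℝ := fun t => τ₁ * exp (-t / τ₁) - τ₂ * exp (-t / τ₂) with hgdef
  have hderiv : ∀ t : ℝ, HasDerivAt g (-exp (-t / τ₁) + exp (-t / τ₂)) t := by
    intro t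
    have h1 : HasDerivAt (fun t : ℝ => -t / τ₁) (-1 / τ₁) t := by
      simpa using ((hasDerivAt_id t).neg.div_const τ₁)
    have h2 : HasDerivAt (fun t : ℝ => -t / τ₂) (-1 / τ₂) t := by
      simpa using ((hasDerivAt_id t).neg.div_const τ₂)
    have e1 := (h1.exp.const_mul τ₁)
    have e2 := (h2.exp.const_mul τ₂)
    have := e1.sub e2
    refine this.congr_deriv ?_
    field_simp
    ring
  have hanti : StrictAntiOn g (Set.Ici 0) := by
    apply strictAntiOn_of_deriv_neg (convex_Ici 0)
    · exact fun t _ => (hderiv t).differentiableAt.continuousAt.continuousWithinAt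
    · intro t ht
      rw [interior_Ici] at ht
      rw [(hderiv t).deriv]
      have h12 : t / τ₁ < t / τ₂ := div_lt_div_of_pos_left ht hτ₂ hτ
      have : exp (-t / τ₂) < exp (-t / τ₁) := by
        apply exp_lt_exp.mpr
        rw [neg_div, neg_div]
        linarith
      linarith
  have hg0 : g 0 = τ₁ - τ₂ := by simp [hgdef]
  have hgle : ∀ x : ℝ, 0 ≤ x → g x ≤ τ₁ - τ₂ := by
    intro x hx
    rcases eq_or_lt_of_le hx with h | h
    · rw [← h, hg0]
    · rw [← hg0]; exact (hanti Set.self_mem_Ici hx h).le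
  have hint : ∀ τ : ℝ, 0 < τ → Integrable (fun ω => exp (-S ω / τ)) P := by
    intro τ hτ'
    apply (integrable_const (1 : ℝ)).mono'
    · exact ((hSmeas.neg.div_const τ).exp).aestronglyMeasurable
    · filter_upwards with ω
      rw [norm_eq_abs, abs_of_pos (exp_pos _)]
      exact exp_le_one_iff.mpr
        (div_nonpos_of_nonpos_of_nonneg (neg_nonpos.mpr (hS ω)) hτ'.le)
  have hi1 := hint τ₁ hτ₁
  have hi2 := hint τ₂ hτ₂
  have hgint : Integrable (fun ω => g (S ω)) P := (hi1.const_mul τ₁).sub (hi2.const_mul τ₂)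
  have hne : τ₁ - τ₂ ≠ 0 := by linarith
  have key : τ₁ * ∫ ω, exp (-S ω / τ₁) ∂P - τ₂ * ∫ ω, exp (-S ω / τ₂) ∂P = τ₁ - τ₂ := by
    field_simp at heq
    simpa only [neg_div] using heq
  have hintg : ∫ ω, g (S ω) ∂P = τ₁ - τ₂ := by
    rw [hgdef]
    simp only
    rw [integral_sub (hi1.const_mul τ₁) (hi2.const_mul τ₂), integral_const_mul,
      integral_const_mul]
    exact key
  -- h := (τ₁ - τ₂) - g (S ω) is nonneg with zero integral
  have hh_nonneg : 0 ≤ᵐ[P] fun ω => (τ₁ - τ₂) - g (S ω) :=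
    Filter.Eventually.of_forall fun ω => sub_nonneg.mpr (hgle _ (hS ω))
  have hh_int : Integrable (fun ω => (τ₁ - τ₂) - g (S ω)) P :=
    (integrable_const _).sub hgint
  have hh_zero : ∫ ω, ((τ₁ - τ₂) - g (S ω)) ∂P = 0 := by
    rw [integral_sub (integrable_const _) hgint, hintg, integral_const]
    simp
  have hae : (fun ω => (τ₁ - τ₂) - g (S ω)) =ᵐ[P] 0 :=
    (integral_eq_zero_iff_of_nonneg_ae hh_nonneg hh_int).mp hh_zero
  have hS0 : S =ᵐ[P] fun _ => (0 : ℝ) := by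
    filter_upwards [hae] with ω hω
    simp only [Pi.zero_apply] at hω
    have hgeq : g (S ω) = g 0 := by rw [hg0]; linarith
    exact hanti.injOn (Set.mem_Ici.mpr (hS ω)) (Set.mem_Ici.mpr le_rfl) hgeq
  rw [variance_eq_sub hL2]
  have h1 : ∫ ω, (S ^ 2) ω ∂P = 0 := by
    rw [integral_congr_ae (g := fun _ => (0 : ℝ))]
    · simp
    · filter_upwards [hS0] with ω hω
      simp [hω]
  have h2 : ∫ ω, S ω ∂P = 0 := by
    rw [integral_congr_ae hS0]
    simp
  rw [h1, h2]
  simp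
end

section
/- Under the model of Theorem 1 (RNA count N₂ in equilibrium with delay distribution μ), the variance satisfies Var[N₂(t)] ≤ λ₁⁺λ₂τ₁τ₂ + λ₁⁺λ₁⁻λ₂²τ₁²τ₂²·τ₁/(τ₁+τ₂), with equality if and only if μ is a Dirac measure. Formally: for any two i.i.d. nonnegative random variables G, G' with law μ and τ₁ > τ₂ > 0, (τ₁·E[e^{-|G'-G|/τ₁}] - τ₂·E[e^{-|G'-G|/τ₂}])/(τ₁-τ₂) ≤ 1, with equality iff Var[G'-G] = 0, i.e., iff μ is a point mass. -/
open MeasureTheory ProbabilityTheory Real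

-- auxiliary derivative lemma
lemma aux_hasDeriv (s t : ℝ) (ht : t ≠ 0) :
    HasDerivAt (fun x : ℝ => x * Real.exp (-s / x) - x)
      (Real.exp (-s / t) * (1 + s / t) - 1) t := by
  have h1 : HasDerivAt (fun x : ℝ => -s / x) (s / t ^ 2) t := by
    have := (hasDerivAt_inv ht).const_mul (-s)
    simpa [div_eq_mul_inv, neg_mul, mul_comm] using this
  have h2 : HasDerivAt (fun x : ℝ => Real.exp (-s / x))
      (Real.exp (-s / t) * (s / t ^ 2)) t := h1.exp
  have h3 : HasDerivAt (fun x : ℝ => x * Real.exp (-s / x))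
      (1 * Real.exp (-s / t) + t * (Real.exp (-s / t) * (s / t ^ 2))) t :=
    (hasDerivAt_id t).mul h2
  have h4 : HasDerivAt (fun x : ℝ => x * Real.exp (-s / x) - x)
      (1 * Real.exp (-s / t) + t * (Real.exp (-s / t) * (s / t ^ 2)) - 1) t :=
    h3.sub (hasDerivAt_id t)
  convert h4 using 1
  have e' : t * (s / t ^ 2) = s / t := by
    rw [sq, mul_div_assoc', mul_div_mul_left _ _ ht]
  linear_combination (-Real.exp (-s / t)) * e'

lemma aux_strictAnti {s : ℝ} (hs : 0 < s) :
    StrictAntiOn (fun x : ℝ => x * Real.exp (-s / x) - x) (Set.Ioi 0) := by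
  apply strictAntiOn_of_deriv_neg (convex_Ioi 0)
  · apply ContinuousOn.sub _ continuousOn_id
    apply ContinuousOn.mul continuousOn_id
    apply Real.continuous_exp.comp_continuousOn
    exact ContinuousOn.div continuousOn_const continuousOn_id (fun x hx => ne_of_gt hx)
  · intro t ht
    rw [interior_Ioi] at ht
    have ht0 : (0:ℝ) < t := ht
    rw [(aux_hasDeriv s t ht0.ne').deriv]
    have hx : 0 < s / t := div_pos hs ht0
    have : 1 + s / t < Real.exp (s / t) := by
      have := Real.add_one_lt_exp hx.ne'
      linarith
    have h2 : Real.exp (-s / t) * (1 + s / t) < Real.exp (-s / t) * Real.exp (s / t) :=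
      mul_lt_mul_of_pos_left this (Real.exp_pos _)
    rw [← Real.exp_add] at h2
    simp only [neg_div, neg_add_cancel, Real.exp_zero] at h2 ⊢
    linarith

-- pointwise inequality
lemma aux_pointwise {s τ₁ τ₂ : ℝ} (hs : 0 ≤ s) (hτ₂ : 0 < τ₂) (hτ : τ₂ < τ₁) :
    τ₁ * Real.exp (-s / τ₁) - τ₁ ≤ τ₂ * Real.exp (-s / τ₂) - τ₂ := by
  rcases eq_or_lt_of_le hs with h | h
  · simp [← h]
  · exact le_of_lt (aux_strictAnti h (Set.mem_Ioi.2 hτ₂) (Set.mem_Ioi.2 (hτ₂.trans hτ)) hτ)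

lemma aux_pointwise_strict {s τ₁ τ₂ : ℝ} (hs : 0 < s) (hτ₂ : 0 < τ₂) (hτ : τ₂ < τ₁) :
    τ₁ * Real.exp (-s / τ₁) - τ₁ < τ₂ * Real.exp (-s / τ₂) - τ₂ :=
  aux_strictAnti hs (Set.mem_Ioi.2 hτ₂) (Set.mem_Ioi.2 (hτ₂.trans hτ)) hτ
/-- Sharp bound for the delay term in the variance of the RNA number: for `G, G'` i.i.d.
nonnegative with law `μ` of finite variance, and `τ₁ > τ₂ > 0`,
`(τ₁ E[e^{-|G'-G|/τ₁}] - τ₂ E[e^{-|G'-G|/τ₂}])/(τ₁-τ₂) ≤ 1`, with equality iff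
`Var[G'-G] = 0`, which holds iff `μ` is a point mass. -/
theorem rna_variance_bound {Ω : Type*} [MeasurableSpace Ω] (P : Measure Ω)
    [IsProbabilityMeasure P]
    (G G' : Ω → ℝ) (hGmeas : Measurable G) (hG'meas : Measurable G')
    (hG : ∀ ω, 0 ≤ G ω) (hG' : ∀ ω, 0 ≤ G' ω)
    (hid : IdentDistrib G G' P P) (hindep : IndepFun G G' P)
    (hL2 : MemLp G 2 P)
    (τ₁ τ₂ : ℝ) (hτ₂ : 0 < τ₂) (hτ : τ₂ < τ₁) :
    ((τ₁ * ∫ ω, exp (-|G' ω - G ω| / τ₁) ∂P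
        - τ₂ * ∫ ω, exp (-|G' ω - G ω| / τ₂) ∂P) / (τ₁ - τ₂) ≤ 1) ∧
    ((τ₁ * ∫ ω, exp (-|G' ω - G ω| / τ₁) ∂P
        - τ₂ * ∫ ω, exp (-|G' ω - G ω| / τ₂) ∂P) / (τ₁ - τ₂) = 1 ↔
      variance (fun ω => G' ω - G ω) P = 0) ∧
    (variance (fun ω => G' ω - G ω) P = 0 ↔
      ∃ c : ℝ, 0 ≤ c ∧ Measure.map G P = Measure.dirac c) := by
  have hτ₁ : 0 < τ₁ := hτ₂.trans hτ
  have hden : 0 < τ₁ - τ₂ := sub_pos.2 hτ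
  have hSmeas : Measurable fun ω => |G' ω - G ω| := (hG'meas.sub hGmeas).abs
  have hSnn : ∀ ω, (0:ℝ) ≤ |G' ω - G ω| := fun ω => abs_nonneg _
  -- integrability of the exponential terms
  have hint : ∀ τ : ℝ, 0 < τ → Integrable (fun ω => exp (-|G' ω - G ω| / τ)) P := by
    intro τ hτ'
    apply Integrable.mono' (integrable_const (1:ℝ))
      (((hSmeas.neg).div_const τ).exp).aestronglyMeasurable
    filter_upwards with ω
    rw [Real.norm_eq_abs, abs_of_pos (Real.exp_pos _)]
    calc exp (-|G' ω - G ω| / τ) ≤ exp 0 := by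
          apply Real.exp_le_exp.2
          apply div_nonpos_of_nonpos_of_nonneg (neg_nonpos.2 (hSnn ω)) hτ'.le
      _ = 1 := Real.exp_zero
  have I1 := hint τ₁ hτ₁
  have I2 := hint τ₂ hτ₂
  set h : Ω → ℝ := fun ω =>
    (τ₂ * exp (-|G' ω - G ω| / τ₂) - τ₂) - (τ₁ * exp (-|G' ω - G ω| / τ₁) - τ₁) with hh
  have J2 : Integrable (fun ω => τ₂ * exp (-|G' ω - G ω| / τ₂) - τ₂) P := by
    exact (I2.const_mul τ₂).sub (integrable_const τ₂)
  have J1 : Integrable (fun ω => τ₁ * exp (-|G' ω - G ω| / τ₁) - τ₁) P := by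
    exact (I1.const_mul τ₁).sub (integrable_const τ₁)
  have hInt : Integrable h P := by exact J2.sub J1
  have hnn : ∀ ω, 0 ≤ h ω := fun ω => sub_nonneg.2 (aux_pointwise (hSnn ω) hτ₂ hτ)
  have hIntEq : ∫ ω, h ω ∂P = (τ₁ - τ₂) -
      (τ₁ * ∫ ω, exp (-|G' ω - G ω| / τ₁) ∂P
        - τ₂ * ∫ ω, exp (-|G' ω - G ω| / τ₂) ∂P) := by
    simp only [hh]
    rw [integral_sub J2 J1,
      integral_sub (I2.const_mul τ₂) (integrable_const τ₂),
      integral_sub (I1.const_mul τ₁) (integrable_const τ₁),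
      integral_const_mul, integral_const_mul, integral_const, integral_const]
    simp only [measure_univ, ENNReal.toReal_one, smul_eq_mul, one_mul, probReal_univ]
    ring
  have key1 : 0 ≤ ∫ ω, h ω ∂P := integral_nonneg hnn
  -- equality iff S = 0 a.e.
  have hzero_iff : ∫ ω, h ω ∂P = 0 ↔ h =ᵐ[P] 0 :=
    integral_eq_zero_iff_of_nonneg hnn hInt
  have hS_iff : h =ᵐ[P] 0 ↔ (fun ω => G' ω - G ω) =ᵐ[P] 0 := by
    constructor <;> intro hae <;> filter_upwards [hae] with ω hω
    · by_contra hne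
      have hs : 0 < |G' ω - G ω| := abs_pos.2 (by simpa using hne)
      have := aux_pointwise_strict hs hτ₂ hτ
      simp only [hh, Pi.zero_apply] at hω
      linarith
    · simp only [Pi.zero_apply] at hω
      simp [hh, hω]
  -- variance = 0 iff G' - G = 0 a.e.
  have hL2' : MemLp G' 2 P := hid.memLp_snd hL2
  have hX2 : MemLp (fun ω => G' ω - G ω) 2 P := hL2'.sub hL2
  have hmean : ∫ ω, (G' ω - G ω) ∂P = 0 := by
    rw [integral_sub (hL2'.integrable one_le_two) (hL2.integrable one_le_two),
      ← hid.integral_eq, sub_self]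
  have hvar_iff : variance (fun ω => G' ω - G ω) P = 0 ↔
      (fun ω => G' ω - G ω) =ᵐ[P] 0 := by
    rw [variance, ENNReal.toReal_eq_zero_iff]
    constructor
    · rintro (h0 | htop)
      · have := (evariance_eq_zero_iff hX2.aestronglyMeasurable.aemeasurable).1 h0
        filter_upwards [this] with ω hω
        rw [hω, Pi.zero_apply, hmean]
      · exact absurd htop hX2.evariance_lt_top.ne
    · intro h0
      left
      apply (evariance_eq_zero_iff hX2.aestronglyMeasurable.aemeasurable).2
      filter_upwards [h0] with ω hω
      simp only [Pi.zero_apply] at hω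
      rw [hω, hmean]
  refine ⟨?_, ?_, ?_⟩
  · rw [div_le_one hden]; linarith
  · rw [div_eq_one_iff_eq hden.ne', hvar_iff, ← hS_iff, ← hzero_iff]
    constructor <;> intro h' <;> linarith
  · rw [hvar_iff]
    constructor
    · intro h0
      -- independence forces G to be a.e. constant
      have hrw : (fun ω => G' ω - G ω) = G' + (-G) := by
        ext ω; simp [sub_eq_add_neg]
      have indep' : IndepFun G' (-G) P := by
        have := (hindep.symm).comp measurable_id measurable_neg
        exact this
      have hXvar : variance (fun ω => G' ω - G ω) P
          = variance G' P + variance G P := by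
        rw [hrw, indep'.variance_add hL2' hL2.neg]
        congr 1
        have : (-G : Ω → ℝ) = fun ω => (-1 : ℝ) * G ω := by ext ω; simp
        rw [this, variance_const_mul]; ring
      have hvX : variance (fun ω => G' ω - G ω) P = 0 := hvar_iff.2 h0
      have hvarG : variance G P = 0 := by
        have h1 := variance_nonneg G P
        have h2 := variance_nonneg G' P
        rw [hXvar] at hvX; linarith
      have heG : evariance G P = 0 := by
        rw [variance, ENNReal.toReal_eq_zero_iff] at hvarG
        rcases hvarG with h' | h'
        · exact h'
        · exact absurd h' hL2.evariance_lt_top.ne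
      have hGae : G =ᵐ[P] fun _ => ∫ ω, G ω ∂P :=
        (evariance_eq_zero_iff hGmeas.aemeasurable).1 heG
      refine ⟨∫ ω, G ω ∂P, integral_nonneg hG, ?_⟩
      rw [Measure.map_congr hGae, Measure.map_const, measure_univ, one_smul]
    · rintro ⟨c, hc, hmap⟩
      have hGc : G =ᵐ[P] fun _ => c := by
        rw [Filter.EventuallyEq, ae_iff]
        have : {ω | ¬ G ω = (fun _ => c) ω} = G ⁻¹' {c}ᶜ := by
          ext ω; simp
        rw [this, ← Measure.map_apply hGmeas (measurableSet_singleton c).compl, hmap,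
          Measure.dirac_apply' c (measurableSet_singleton c).compl]
        simp
      have hG'c : G' =ᵐ[P] fun _ => c := by
        rw [Filter.EventuallyEq, ae_iff]
        have : {ω | ¬ G' ω = (fun _ => c) ω} = G' ⁻¹' {c}ᶜ := by
          ext ω; simp
        rw [this, ← Measure.map_apply hG'meas (measurableSet_singleton c).compl,
          ← hid.map_eq, hmap, Measure.dirac_apply' c (measurableSet_singleton c).compl]
        simp
      filter_upwards [hGc, hG'c] with ω h1 h2
      simp [h1, h2]
end

section
/- Let σ, τ > 0 with σ ≠ τ, and let T, T' be i.i.d. Exp(1/σ) random variables. Then E[exp(-|T - T'|/τ)] = τ/(σ + τ), and more generally for a constant c ≥ 0, E[exp(-|c + T - T'|/τ)] = (τ/(τ+σ))·(τ·e^{-c/τ} - σ·e^{-c/σ})/(τ - σ). -/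
open MeasureTheory ProbabilityTheory Real

open Set
open scoped ENNReal NNReal

lemma myexp_int_interval {k : ℝ} (hk : k ≠ 0) (m : ℝ) :
    ∫ x in (0:ℝ)..m, exp (k * x) = (exp (k * m) - 1) / k := by
  rw [intervalIntegral.integral_comp_mul_left exp hk, integral_exp, mul_zero, exp_zero,
    smul_eq_mul, inv_mul_eq_div]

lemma myexp_int_Ioi {k : ℝ} (hk : 0 < k) (p : ℝ) :
    ∫ x in Ioi p, exp (-k * x) = exp (-k * p) / k := by
  have h := integral_comp_mul_left_Ioi (fun x => exp (-x)) p hk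
  simp only [smul_eq_mul, integral_exp_neg_Ioi] at h
  simp only [neg_mul, h, inv_mul_eq_div]

lemma my_inner_calc {a b : ℝ} (ha : 0 < a) (hb : 0 < b) (hab : b - a ≠ 0) {m : ℝ} (hm : 0 ≤ m) :
    ∫ y in Ioi (0:ℝ), exp (-|m - y| * b) * (a * exp (-a * y))
      = (a / (b - a) + a / (b + a)) * exp (-a * m) - (a / (b - a)) * exp (-b * m) := by
  have hba : (0:ℝ) < b + a := by linarith
  have hcont : Continuous fun y : ℝ => exp (-|m - y| * b) * (a * exp (-a * y)) := by
    fun_prop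
  have hint2 : IntegrableOn (fun y : ℝ => exp (-|m - y| * b) * (a * exp (-a * y))) (Ioi m) := by
    refine ((exp_neg_integrableOn_Ioi m ha).const_mul a).mono' hcont.aestronglyMeasurable ?_
    filter_upwards with y
    have h1 : exp (-|m - y| * b) ≤ 1 := by
      rw [← exp_zero]
      apply exp_le_exp.mpr
      have : 0 ≤ |m - y| * b := mul_nonneg (abs_nonneg _) hb.le
      linarith
    have h2 : 0 ≤ a * exp (-a * y) := by positivity
    rw [norm_eq_abs, abs_of_nonneg (by positivity)]
    calc exp (-|m - y| * b) * (a * exp (-a * y)) ≤ 1 * (a * exp (-a * y)) := by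
          exact mul_le_mul_of_nonneg_right h1 h2
      _ = a * exp (-a * y) := one_mul _
  have hsplit : Ioi (0:ℝ) = Ioc 0 m ∪ Ioi m := (Ioc_union_Ioi_eq_Ioi hm).symm
  rw [hsplit, setIntegral_union (Ioc_disjoint_Ioi le_rfl) measurableSet_Ioi
    (hcont.integrableOn_Ioc) hint2]
  have piece1 : ∫ y in Ioc (0:ℝ) m, exp (-|m - y| * b) * (a * exp (-a * y))
      = (a * exp (-b * m)) * ((exp ((b - a) * m) - 1) / (b - a)) := by
    rw [setIntegral_congr_fun measurableSet_Ioc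
      (g := fun y => (a * exp (-b * m)) * exp ((b - a) * y)) ?_]
    · rw [integral_const_mul, ← intervalIntegral.integral_of_le hm, myexp_int_interval hab]
    · intro y hy
      have habs : |m - y| = m - y := abs_of_nonneg (by linarith [hy.2])
      dsimp only
      rw [habs, show rexp (-(m - y) * b) * (a * rexp (-a * y))
          = a * (rexp (-(m - y) * b) * rexp (-a * y)) from by ring, ← exp_add, mul_assoc,
        ← exp_add]
      ring_nf
  have piece2 : ∫ y in Ioi m, exp (-|m - y| * b) * (a * exp (-a * y))
      = (a * exp (b * m)) * (exp (-(b + a) * m) / (b + a)) := by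
    rw [setIntegral_congr_fun measurableSet_Ioi
      (g := fun y => (a * exp (b * m)) * exp (-(b + a) * y)) ?_]
    · rw [integral_const_mul, myexp_int_Ioi hba]
    · intro y hy
      have habs : |m - y| = y - m := by
        rw [abs_sub_comm]; exact abs_of_nonneg (by linarith [mem_Ioi.mp hy])
      dsimp only
      rw [habs, show rexp (-(y - m) * b) * (a * rexp (-a * y))
          = a * (rexp (-(y - m) * b) * rexp (-a * y)) from by ring, ← exp_add, mul_assoc,
        ← exp_add]
      ring_nf
  rw [piece1, piece2]
  have e1 : exp (-b * m) * exp ((b - a) * m) = exp (-a * m) := by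
    rw [← exp_add]; ring_nf
  have e2 : exp (b * m) * exp (-(b + a) * m) = exp (-a * m) := by
    rw [← exp_add]; ring_nf
  rw [show (a * exp (-b * m)) * ((exp ((b - a) * m) - 1) / (b - a))
      = a * (exp (-b * m) * exp ((b - a) * m) - exp (-b * m)) / (b - a) from by ring,
    show (a * exp (b * m)) * (exp (-(b + a) * m) / (b + a))
      = a * (exp (b * m) * exp (-(b + a) * m)) / (b + a) from by ring, e1, e2]
  ring


lemma my_outer_calc {a b : ℝ} (ha : 0 < a) (hb : 0 < b) (hab : b - a ≠ 0) (c : ℝ) :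
    ∫ x in Ioi (0:ℝ),
      ((a / (b - a) + a / (b + a)) * exp (-a * (c + x)) - (a / (b - a)) * exp (-b * (c + x)))
        * (a * exp (-a * x))
      = ((a / (b - a) + a / (b + a)) * a * exp (-a * c)) / (2 * a)
        - ((a / (b - a)) * a * exp (-b * c)) / (b + a) := by
  have hba : (0:ℝ) < b + a := by linarith
  have h2a : (0:ℝ) < 2 * a := by linarith
  have key : ∀ x : ℝ,
      ((a / (b - a) + a / (b + a)) * exp (-a * (c + x)) - (a / (b - a)) * exp (-b * (c + x)))
        * (a * exp (-a * x))
      = ((a / (b - a) + a / (b + a)) * a * exp (-a * c)) * exp (-(2 * a) * x)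
        - ((a / (b - a)) * a * exp (-b * c)) * exp (-(b + a) * x) := by
    intro x
    have h1 : exp (-a * (c + x)) * exp (-a * x) = exp (-a * c) * exp (-(2 * a) * x) := by
      rw [← exp_add, ← exp_add]; ring_nf
    have h2 : exp (-b * (c + x)) * exp (-a * x) = exp (-b * c) * exp (-(b + a) * x) := by
      rw [← exp_add, ← exp_add]; ring_nf
    linear_combination ((a / (b - a) + a / (b + a)) * a) * h1 - ((a / (b - a)) * a) * h2
  simp_rw [key]
  rw [integral_sub (((exp_neg_integrableOn_Ioi 0 h2a).const_mul _))
      (((exp_neg_integrableOn_Ioi 0 hba).const_mul _)),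
    integral_const_mul, integral_const_mul, myexp_int_Ioi h2a, myexp_int_Ioi hba]
  simp only [mul_zero, exp_zero]
  field_simp
lemma my_integral_expMeasure {r : ℝ} (hr : 0 < r) (g : ℝ → ℝ) :
    ∫ x, g x ∂(expMeasure r) = ∫ x in Ioi (0:ℝ), g x * (r * exp (-r * x)) := by
  have hpdf : ∀ x : ℝ, exponentialPDFReal r x = if 0 ≤ x then r * exp (-r * x) else 0 := by
    intro x
    rw [exponentialPDFReal, gammaPDFReal]
    simp only [rpow_one, Real.Gamma_one, div_one, sub_self, rpow_zero, mul_one, neg_mul]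
  have hd : expMeasure r
      = volume.withDensity (fun x => ((exponentialPDFReal r x).toNNReal : ℝ≥0∞)) := rfl
  rw [hd, integral_withDensity_eq_integral_smul
    ((measurable_exponentialPDFReal r).real_toNNReal) g]
  have : ∀ x : ℝ, ((exponentialPDFReal r x).toNNReal : ℝ≥0) • g x
      = (Ici (0:ℝ)).indicator (fun x => g x * (r * exp (-r * x))) x := by
    intro x
    rw [NNReal.smul_def, smul_eq_mul,
      Real.coe_toNNReal _ (exponentialPDFReal_nonneg hr x), hpdf]
    by_cases hx : 0 ≤ x
    · rw [if_pos hx, indicator_of_mem (mem_Ici.mpr hx)]; ring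
    · rw [if_neg hx, indicator_of_notMem (by simpa using hx)]; ring
  simp_rw [this]
  rw [integral_indicator measurableSet_Ici, integral_Ici_eq_integral_Ioi]

lemma my_alg2 {σ τ : ℝ} (hσ : 0 < σ) (hτ : 0 < τ) (hne : σ ≠ τ) (E F : ℝ) :
    ((σ⁻¹ / (τ⁻¹ - σ⁻¹) + σ⁻¹ / (τ⁻¹ + σ⁻¹)) * σ⁻¹ * E) / (2 * σ⁻¹)
      - ((σ⁻¹ / (τ⁻¹ - σ⁻¹)) * σ⁻¹ * F) / (τ⁻¹ + σ⁻¹)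
    = τ / (τ + σ) * ((τ * F - σ * E) / (τ - σ)) := by
  have h1 : τ⁻¹ - σ⁻¹ ≠ 0 := by
    rw [sub_ne_zero]
    exact fun h => hne (by rw [← inv_inv σ, ← inv_inv τ, h])
  have h2 : τ⁻¹ + σ⁻¹ ≠ 0 := by positivity
  have h3 : τ + σ ≠ 0 := by positivity
  have h4 : τ - σ ≠ 0 := sub_ne_zero.mpr (Ne.symm hne)
  rw [inv_sub_inv hτ.ne' hσ.ne', inv_add_inv hτ.ne' hσ.ne']
  have h5 : σ - τ ≠ 0 := sub_ne_zero.mpr hne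
  field_simp
  ring

/-- For `T, T'` i.i.d. exponential with mean `σ` and `τ > 0`, `τ ≠ σ`:
`E[exp(-|T-T'|/τ)] = τ/(σ+τ)`, and for any constant `c ≥ 0`,
`E[exp(-|c+T-T'|/τ)] = (τ/(τ+σ)) (τ e^{-c/τ} - σ e^{-c/σ})/(τ-σ)`. -/
theorem exp_pair_laplace {Ω : Type*} [MeasurableSpace Ω] (P : Measure Ω)
    [IsProbabilityMeasure P]
    (T T' : Ω → ℝ) (σ τ : ℝ) (hσ : 0 < σ) (hτ : 0 < τ) (hne : σ ≠ τ)
    (hT : Measure.map T P = expMeasure σ⁻¹)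
    (hT' : Measure.map T' P = expMeasure σ⁻¹)
    (hmeas : Measurable T) (hmeas' : Measurable T')
    (hindep : IndepFun T T' P)
    (c : ℝ) (hc : 0 ≤ c) :
    (∫ ω, exp (-|T ω - T' ω| / τ) ∂P) = τ / (σ + τ) ∧
    (∫ ω, exp (-|c + T ω - T' ω| / τ) ∂P) =
      τ / (τ + σ) * ((τ * exp (-c / τ) - σ * exp (-c / σ)) / (τ - σ)) := by
  have hμ : IsProbabilityMeasure (expMeasure σ⁻¹) :=
    isProbabilityMeasure_expMeasure (inv_pos.mpr hσ)
  have ha : 0 < σ⁻¹ := inv_pos.mpr hσ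
  have hb : 0 < τ⁻¹ := inv_pos.mpr hτ
  have hab : τ⁻¹ - σ⁻¹ ≠ 0 := by
    rw [sub_ne_zero]
    exact fun h => hne (by rw [← inv_inv σ, ← inv_inv τ, h])
  have key : ∀ d : ℝ, 0 ≤ d → ∫ ω, exp (-|d + T ω - T' ω| / τ) ∂P
      = ((σ⁻¹ / (τ⁻¹ - σ⁻¹) + σ⁻¹ / (τ⁻¹ + σ⁻¹)) * σ⁻¹ * exp (-σ⁻¹ * d)) / (2 * σ⁻¹)
        - ((σ⁻¹ / (τ⁻¹ - σ⁻¹)) * σ⁻¹ * exp (-τ⁻¹ * d)) / (τ⁻¹ + σ⁻¹) := by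
    intro d hd
    have hF : Continuous fun p : ℝ × ℝ => exp (-|d + p.1 - p.2| / τ) := by fun_prop
    have hmap : Measure.map (fun ω => (T ω, T' ω)) P
        = (expMeasure σ⁻¹).prod (expMeasure σ⁻¹) := by
      have h := (indepFun_iff_map_prod_eq_prod_map_map hmeas.aemeasurable
        hmeas'.aemeasurable).mp hindep
      rw [hT, hT'] at h
      exact h
    have step1 : ∫ ω, exp (-|d + T ω - T' ω| / τ) ∂P
        = ∫ p : ℝ × ℝ, exp (-|d + p.1 - p.2| / τ)
            ∂((expMeasure σ⁻¹).prod (expMeasure σ⁻¹)) := by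
      rw [← hmap, integral_map (hmeas.prodMk hmeas').aemeasurable hF.aestronglyMeasurable]
    have hint : Integrable (fun p : ℝ × ℝ => exp (-|d + p.1 - p.2| / τ))
        ((expMeasure σ⁻¹).prod (expMeasure σ⁻¹)) := by
      refine (integrable_const (1:ℝ)).mono' hF.aestronglyMeasurable ?_
      filter_upwards with p
      rw [norm_eq_abs, abs_exp, ← exp_zero]
      apply exp_le_exp.mpr
      rw [neg_div, neg_nonpos]
      exact div_nonneg (abs_nonneg _) hτ.le
    rw [step1, integral_prod _ hint, my_integral_expMeasure ha]
    rw [setIntegral_congr_fun measurableSet_Ioi (g := fun x =>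
      ((σ⁻¹ / (τ⁻¹ - σ⁻¹) + σ⁻¹ / (τ⁻¹ + σ⁻¹)) * exp (-σ⁻¹ * (d + x))
        - (σ⁻¹ / (τ⁻¹ - σ⁻¹)) * exp (-τ⁻¹ * (d + x))) * (σ⁻¹ * exp (-σ⁻¹ * x))) ?_]
    · exact my_outer_calc ha hb hab d
    · intro x hx
      dsimp only
      congr 1
      rw [my_integral_expMeasure ha]
      have h := my_inner_calc ha hb hab (m := d + x) (by
        have := mem_Ioi.mp hx; linarith)
      rw [← h]
      apply setIntegral_congr_fun measurableSet_Ioi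
      intro y hy
      dsimp only
      rw [div_eq_mul_inv]
  constructor
  · have h := key 0 le_rfl
    simp only [zero_add, mul_zero, neg_zero, exp_zero] at h
    rw [h, my_alg2 hσ hτ hne, mul_one, mul_one,
      div_self (sub_ne_zero.mpr (Ne.symm hne)), mul_one, add_comm τ σ]
  · have h := key c hc
    rw [h, my_alg2 hσ hτ hne, show -τ⁻¹ * c = -c / τ from by ring,
      show -σ⁻¹ * c = -c / σ from by ring]
end
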